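/- Let P₀ and P₁ be computational problems (Ξᵢ, Ωᵢ, Mᵢ, Λᵢ) satisfying the SCI consistency condition, with Ωᵢ ≠ ∅ and Λᵢ ≠ ∅ for i = 0, 1. Then there exists a computational problem U satisfying the consistency condition such that both P₀ and P₁ finite-query transport-reduce to U with continuous decoders. Explicitly, U has input class the tagged disjoint union ({0} × Ω₀) ∪ ({1} × Ω₁), output space the tagged disjoint union of M₀ and M₁ with inter-component distance 2 and intra-component distance min{1, dᵢ}, target map (i, A) ↦ (i, Ξᵢ(A)), and queries the zero-extended queries of each component together with the tag query τ(i, A) = i. -/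

import Mathlib

/-- An SCI computational problem. -/
structure CompProb where
  Ω : Type
  M : Type
  met : MetricSpace M
  Ξ : Ω → M
  Λ : Set (Ω → ℂ)

/-- The continuous decoder condition between the metric output spaces. -/
def ContDecoder (M N : Type) (mM : MetricSpace M) (mN : MetricSpace N)
    (D : M → N) : Prop := by
  letI := mM; letI := mN; exact Continuous D

/-- The SCI consistency condition on a computational problem. -/
def Consistent (P : CompProb) : Prop :=
  ∀ A B : P.Ω, P.Ξ A ≠ P.Ξ B → ∃ f ∈ P.Λ, f A ≠ f B

/-- Finite-query transport with continuous decoders. -/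
def Reduces (Q P : CompProb) : Prop :=
  ∃ (E : Q.Ω → P.Ω) (D : P.M → Q.M),
    ContDecoder P.M Q.M P.met Q.met D ∧
    (∀ A : Q.Ω, Q.Ξ A = D (P.Ξ (E A))) ∧
    (∀ f ∈ P.Λ, ∃ (m : ℕ) (_ : 0 < m) (γ : Fin m → (Q.Ω → ℂ))
      (ϑ : (Fin m → ℂ) → ℂ),
      (∀ j, γ j ∈ Q.Λ) ∧ ∀ A : Q.Ω, f (E A) = ϑ (fun j => γ j A))

/-- Upward directedness on the nondegenerate subclass: any two consistent
computational problems with nonempty input class and nonempty evaluation family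
admit a common consistent upper bound with respect to finite-query transport
with continuous decoders. -/
theorem upward_directed_nondegenerate
    (P₀ P₁ : CompProb)
    (hc0 : Consistent P₀) (hc1 : Consistent P₁)
    (hΩ0 : Nonempty P₀.Ω) (hΩ1 : Nonempty P₁.Ω)
    (hΛ0 : P₀.Λ.Nonempty) (hΛ1 : P₁.Λ.Nonempty) :
    ∃ U : CompProb, Consistent U ∧ Reduces P₀ U ∧ Reduces P₁ U := by
  letI := P₀.met; letI := P₁.met
  obtain ⟨g₀, hg₀⟩ := hΛ0
  obtain ⟨g₁, hg₁⟩ := hΛ1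
  set U : CompProb :=
    { Ω := P₀.Ω ⊕ P₁.Ω
      M := P₀.M ⊕ P₁.M
      met := Metric.metricSpaceSum
      Ξ := Sum.map P₀.Ξ P₁.Ξ
      Λ := {f | (∃ g ∈ P₀.Λ, f = Sum.elim g (fun _ => 0)) ∨
               (∃ g ∈ P₁.Λ, f = Sum.elim (fun _ => 0) g) ∨
               f = Sum.elim (fun _ => (0 : ℂ)) (fun _ => 1)} } with hU
  refine ⟨U, ?_, ?_, ?_⟩
  · -- Consistency
    rintro (a | a) (b | b) hne
    · have h : P₀.Ξ a ≠ P₀.Ξ b := fun h => hne (congrArg Sum.inl h)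
      obtain ⟨g, hg, hgab⟩ := hc0 a b h
      exact ⟨Sum.elim g (fun _ => 0), Or.inl ⟨g, hg, rfl⟩, by simpa using hgab⟩
    · exact ⟨Sum.elim (fun _ => (0 : ℂ)) (fun _ => 1), Or.inr (Or.inr rfl), by simp⟩
    · exact ⟨Sum.elim (fun _ => (0 : ℂ)) (fun _ => 1), Or.inr (Or.inr rfl),
        by simp⟩
    · have h : P₁.Ξ a ≠ P₁.Ξ b := fun h => hne (congrArg Sum.inr h)
      obtain ⟨g, hg, hgab⟩ := hc1 a b h
      exact ⟨Sum.elim (fun _ => 0) g, Or.inr (Or.inl ⟨g, hg, rfl⟩), by simpa using hgab⟩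
  · -- Reduces P₀ U
    refine ⟨Sum.inl, Sum.elim id (fun _ => P₀.Ξ hΩ0.some), ?_, ?_, ?_⟩
    · unfold ContDecoder; exact Continuous.sumElim continuous_id continuous_const
    · intro A; rfl
    · rintro f (⟨g, hg, rfl⟩ | ⟨g, hg, rfl⟩ | rfl)
      · exact ⟨1, one_pos, fun _ => g, fun v => v 0, fun _ => hg, fun A => rfl⟩
      · exact ⟨1, one_pos, fun _ => g₀, fun _ => 0, fun _ => hg₀, fun A => rfl⟩
      · exact ⟨1, one_pos, fun _ => g₀, fun _ => 0, fun _ => hg₀, fun A => rfl⟩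
  · -- Reduces P₁ U
    refine ⟨Sum.inr, Sum.elim (fun _ => P₁.Ξ hΩ1.some) id, ?_, ?_, ?_⟩
    · unfold ContDecoder; exact Continuous.sumElim continuous_const continuous_id
    · intro A; rfl
    · rintro f (⟨g, hg, rfl⟩ | ⟨g, hg, rfl⟩ | rfl)
      · exact ⟨1, one_pos, fun _ => g₁, fun _ => 0, fun _ => hg₁, fun A => rfl⟩
      · exact ⟨1, one_pos, fun _ => g, fun v => v 0, fun _ => hg, fun A => rfl⟩
      · exact ⟨1, one_pos, fun _ => g₁, fun _ => 1, fun _ => hg₁, fun A => rfl⟩
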